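/- arXiv:2209.06490 — 2 statements merged into one kernel-verified Lean document; each statement's English description precedes it below -/
import Mathlib

section
/- Let A be a unital complex Banach algebra and let D, h, δ ∈ A with hδ = δh, and assume that cosh(Dh) := Σ_{n≥0} D^{2n}h^{2n}/(2n)! is invertible in A. Then for all real t sufficiently close to 0 the element cosh(D(h+tδ)) := Σ_{n≥0} D^{2n}(h+tδ)^{2n}/(2n)! is invertible, and the map t ↦ cosh(D(h+tδ))^{-1} is differentiable at t = 0 with derivative −cosh(Dh)^{-1}·D·sinh(Dh)·δ·cosh(Dh)^{-1}, where sinh(Dh) := Σ_{n≥0} D^{2n+1}h^{2n+1}/(2n+1)!. -/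
open scoped Nat

private lemma two_mul_le_two_pow (n : ℕ) : 2 * n ≤ 2 ^ n := by
  induction n with
  | zero => simp
  | succ m ih =>
    rcases Nat.eq_zero_or_pos m with h | h
    · simp [h]
    · have h2 : 2 ≤ 2 ^ m := by
        calc 2 = 2 ^ 1 := rfl
        _ ≤ 2 ^ m := Nat.pow_le_pow_right (by norm_num) h
      rw [pow_succ]
      omega

private lemma key_nat (n : ℕ) : 2 * n * n ! ≤ 2 ^ n * (2 * n)! :=
  Nat.mul_le_mul (two_mul_le_two_pow n) (Nat.factorial_le (by omega))

private lemma aux_pow {A : Type*} [NormedRing A] [NormedAlgebra ℝ A]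
    (h δ : A) (hc : h * δ = δ * h) (m : ℕ) (y : ℝ) :
    HasDerivAt (fun t : ℝ => (h + t • δ) ^ m) (m • ((h + y • δ) ^ (m - 1) * δ)) y := by
  have hx : HasDerivAt (fun t : ℝ => h + t • δ) δ y := by
    simpa using ((hasDerivAt_id y).smul_const δ).const_add h
  have hcδ : Commute δ (h + y • δ) := by
    show δ * (h + y • δ) = (h + y • δ) * δ
    simp [mul_add, add_mul, mul_smul_comm, smul_mul_assoc, hc]
  induction m with
  | zero => simpa using hasDerivAt_const y (1 : A)
  | succ m ih =>
    have h1 : HasDerivAt (fun t : ℝ => (h + t • δ) * (h + t • δ) ^ m)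
        (δ * (h + y • δ) ^ m + (h + y • δ) * (m • ((h + y • δ) ^ (m - 1) * δ))) y :=
      hx.mul ih
    have heq : δ * (h + y • δ) ^ m + (h + y • δ) * (m • ((h + y • δ) ^ (m - 1) * δ))
        = (m + 1) • ((h + y • δ) ^ (m + 1 - 1) * δ) := by
      have hcp : δ * (h + y • δ) ^ m = (h + y • δ) ^ m * δ := (hcδ.pow_right m)
      rcases Nat.eq_zero_or_pos m with hm | hm
      · simp [hm, hcp]
      · have hpp : (h + y • δ) * (h + y • δ) ^ (m - 1) = (h + y • δ) ^ m := by
          rw [← pow_succ']; congr 1; omega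
        rw [mul_smul_comm, ← mul_assoc, hpp, hcp, succ_nsmul]
        simp [add_comm]
    rw [heq] at h1
    convert h1 using 2 with t
    rw [pow_succ']

section Main
variable {A : Type*} [NormedRing A] [NormedAlgebra ℂ A] [CompleteSpace A]

private lemma norm_term_le (D x δ : A) (n : ℕ) (M : ℝ) (hM : ‖x‖ ≤ M) (hδ : ‖δ‖ ≤ M) :
    ‖(((2 * n)! : ℂ))⁻¹ • (D ^ (2 * n) * ((2 * n) • (x ^ (2 * n - 1) * δ)))‖
      ≤ (2 * (‖D‖ * M) ^ 2) ^ n / n ! := by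
  rcases Nat.eq_zero_or_pos n with hn | hn
  · simp [hn]
  · have hM0 : (0:ℝ) ≤ M := le_trans (norm_nonneg _) hM
    have h1 : ‖(((2 * n)! : ℂ))⁻¹ • (D ^ (2 * n) * ((2 * n) • (x ^ (2 * n - 1) * δ)))‖
        ≤ ((2 * n)! : ℝ)⁻¹ * (‖D‖ ^ (2 * n) * ((2 * n) * (M ^ (2 * n - 1) * M))) := by
      rw [norm_smul]
      gcongr
      · simp
      · calc ‖D ^ (2 * n) * ((2 * n) • (x ^ (2 * n - 1) * δ))‖
            ≤ ‖D ^ (2 * n)‖ * ‖(2 * n) • (x ^ (2 * n - 1) * δ)‖ := norm_mul_le _ _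
        _ ≤ ‖D‖ ^ (2 * n) * ((2 * n) * (M ^ (2 * n - 1) * M)) := by
            gcongr
            · exact norm_pow_le' _ (by omega)
            · rw [← Nat.cast_smul_eq_nsmul ℝ]
              rw [norm_smul]
              gcongr
              · simp
              · calc ‖x ^ (2 * n - 1) * δ‖ ≤ ‖x ^ (2 * n - 1)‖ * ‖δ‖ := norm_mul_le _ _
                _ ≤ M ^ (2 * n - 1) * M := by
                    gcongr
                    calc ‖x ^ (2 * n - 1)‖ ≤ ‖x‖ ^ (2 * n - 1) := norm_pow_le' _ (by omega)
                    _ ≤ M ^ (2 * n - 1) := by gcongr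
    refine h1.trans ?_
    have hpow : M ^ (2 * n - 1) * M = M ^ (2 * n) := by
      rw [← pow_succ]
      congr 1
      omega
    rw [hpow]
    have hk : ((2 * n * n ! : ℕ) : ℝ) ≤ ((2 ^ n * (2 * n)! : ℕ) : ℝ) := by
      exact_mod_cast key_nat n
    push_cast at hk
    have hf1 : (0:ℝ) < ((2 * n)! : ℝ) := by exact_mod_cast Nat.factorial_pos _
    have hf2 : (0:ℝ) < (n ! : ℝ) := by exact_mod_cast Nat.factorial_pos _
    rw [inv_mul_eq_div, div_le_div_iff₀ hf1 hf2]
    calc ‖D‖ ^ (2 * n) * (2 * n * (M ^ (2 * n))) * n !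
        = (2 * n * n !) * (‖D‖ * M) ^ (2 * n) := by rw [mul_pow]; ring
    _ ≤ (2 ^ n * (2 * n)!) * (‖D‖ * M) ^ (2 * n) := by
        have : (0:ℝ) ≤ (‖D‖ * M) ^ (2 * n) := by positivity
        exact mul_le_mul_of_nonneg_right hk this
    _ = (2 * (‖D‖ * M) ^ 2) ^ n * (2 * n)! := by
        rw [mul_pow 2 ((‖D‖ * M) ^ 2) n, ← pow_mul, mul_pow ‖D‖ M]; ring

end Main

section Main2
variable {A : Type*} [NormedRing A] [NormedAlgebra ℂ A] [CompleteSpace A]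

private lemma cosh_hasDerivAt (D h δ : A) (hcomm : h * δ = δ * h) :
    HasDerivAt (fun t : ℝ => ∑' n : ℕ, (((2 * n)! : ℂ))⁻¹ • (D ^ (2 * n) * (h + t • δ) ^ (2 * n)))
      (∑' n : ℕ, (((2 * n)! : ℂ))⁻¹ •
          (D ^ (2 * n) * ((2 * n) • ((h + (0:ℝ) • δ) ^ (2 * n - 1) * δ)))) 0 := by
  set M : ℝ := ‖h‖ + ‖δ‖ + 1 with hMdef
  have hδM : ‖δ‖ ≤ M := by rw [hMdef]; linarith [norm_nonneg h]
  have hxM : ∀ y : ℝ, y ∈ Metric.ball (0:ℝ) 1 → ‖h + y • δ‖ ≤ M := by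
    intro y hy
    rw [Metric.mem_ball, Real.dist_eq, sub_zero] at hy
    calc ‖h + y • δ‖ ≤ ‖h‖ + ‖y • δ‖ := norm_add_le _ _
    _ ≤ ‖h‖ + 1 * ‖δ‖ := by
        rw [norm_smul]
        gcongr
        · exact le_of_lt hy
    _ ≤ M := by rw [hMdef]; linarith
  have hg : ∀ (n : ℕ), ∀ y ∈ Metric.ball (0:ℝ) 1,
      HasDerivAt (fun t : ℝ => (((2 * n)! : ℂ))⁻¹ • (D ^ (2 * n) * (h + t • δ) ^ (2 * n)))
        ((((2 * n)! : ℂ))⁻¹ • (D ^ (2 * n) * ((2 * n) • ((h + y • δ) ^ (2 * n - 1) * δ)))) y := by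
    intro n y _
    exact ((aux_pow h δ hcomm (2 * n) y).const_mul (D ^ (2 * n))).const_smul (((2 * n)! : ℂ))⁻¹
  have hg' : ∀ (n : ℕ), ∀ y ∈ Metric.ball (0:ℝ) 1,
      ‖(((2 * n)! : ℂ))⁻¹ • (D ^ (2 * n) * ((2 * n) • ((h + y • δ) ^ (2 * n - 1) * δ)))‖
        ≤ (2 * (‖D‖ * M) ^ 2) ^ n / n ! := by
    intro n y hy
    exact norm_term_le D (h + y • δ) δ n M (hxM y hy) hδM
  have hg0 : Summable fun n : ℕ =>
      (((2 * n)! : ℂ))⁻¹ • (D ^ (2 * n) * (h + (0:ℝ) • δ) ^ (2 * n)) := by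
    apply Summable.of_norm
    rw [← summable_nat_add_iff 1]
    refine Summable.of_nonneg_of_le (fun n => norm_nonneg _)
      (fun n => ?_) ((summable_nat_add_iff 1).mpr
        (Real.summable_pow_div_factorial ((‖D‖ * M) ^ 2)))
    set n' := n + 1 with hn'
    have hn1 : 1 ≤ n' := by omega
    clear_value n'
    clear hn'
    calc ‖(((2 * n')! : ℂ))⁻¹ • (D ^ (2 * n') * (h + (0:ℝ) • δ) ^ (2 * n'))‖
        ≤ ((2 * n')! : ℝ)⁻¹ * (‖D‖ ^ (2 * n') * M ^ (2 * n')) := by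
          rw [norm_smul]
          gcongr
          · simp
          · calc ‖D ^ (2 * n') * (h + (0:ℝ) • δ) ^ (2 * n')‖
                ≤ ‖D ^ (2 * n')‖ * ‖(h + (0:ℝ) • δ) ^ (2 * n')‖ := norm_mul_le _ _
            _ ≤ ‖D‖ ^ (2 * n') * M ^ (2 * n') := by
                gcongr
                · exact norm_pow_le' _ (by omega)
                · calc ‖(h + (0:ℝ) • δ) ^ (2 * n')‖ ≤ ‖h + (0:ℝ) • δ‖ ^ (2 * n') :=
                      norm_pow_le' _ (by omega)
                  _ ≤ M ^ (2 * n') := by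
                      gcongr
                      exact hxM 0 (Metric.mem_ball_self one_pos)
    _ ≤ ((‖D‖ * M) ^ 2) ^ n' / n' ! := by
        have hf1 : (0:ℝ) < ((2 * n')! : ℝ) := by exact_mod_cast Nat.factorial_pos _
        have hf2 : (0:ℝ) < (n' ! : ℝ) := by exact_mod_cast Nat.factorial_pos _
        rw [inv_mul_eq_div, div_le_div_iff₀ hf1 hf2]
        calc ‖D‖ ^ (2*n') * M ^ (2*n') * n' ! = (‖D‖ * M) ^ (2*n') * n' ! := by
              rw [mul_pow]
        _ ≤ (‖D‖ * M) ^ (2*n') * (2*n')! := by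
            have hfle : n' ! ≤ (2*n')! := Nat.factorial_le (by omega)
            gcongr
        _ = ((‖D‖ * M) ^ 2) ^ n' * (2*n')! := by rw [← pow_mul]
  exact hasDerivAt_tsum_of_isPreconnected
    (Real.summable_pow_div_factorial (2 * (‖D‖ * M) ^ 2)) Metric.isOpen_ball
    (convex_ball (0:ℝ) 1).isPreconnected hg hg' (Metric.mem_ball_self one_pos) hg0
    (Metric.mem_ball_self one_pos)

end Main2

section Main3
variable {A : Type*} [NormedRing A] [NormedAlgebra ℂ A] [CompleteSpace A]

private lemma tsum_ident (D h δ : A) :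
    (∑' n : ℕ, (((2 * n)! : ℂ))⁻¹ •
        (D ^ (2 * n) * ((2 * n) • ((h + (0:ℝ) • δ) ^ (2 * n - 1) * δ))))
      = D * (∑' n : ℕ, (((2 * n + 1)! : ℂ))⁻¹ • (D ^ (2 * n + 1) * h ^ (2 * n + 1))) * δ := by
  simp only [zero_smul, add_zero]
  set M : ℝ := ‖h‖ + ‖δ‖ + 1 with hMdef
  have hM0 : (0:ℝ) ≤ M := by positivity
  have hhM : ‖h‖ ≤ M := by rw [hMdef]; linarith [norm_nonneg δ]
  have hδM : ‖δ‖ ≤ M := by rw [hMdef]; linarith [norm_nonneg h]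
  set w : ℕ → A := fun n => (((2 * n)! : ℂ))⁻¹ • (D ^ (2 * n) * ((2 * n) • (h ^ (2 * n - 1) * δ)))
    with hwdef
  set c : ℕ → A := fun n => (((2 * n + 1)! : ℂ))⁻¹ • (D ^ (2 * n + 1) * h ^ (2 * n + 1)) with hcdef
  have hw : Summable w := by
    apply Summable.of_norm
    refine Summable.of_nonneg_of_le (fun n => norm_nonneg _)
      (fun n => norm_term_le D h δ n M hhM hδM)
      (Real.summable_pow_div_factorial (2 * (‖D‖ * M) ^ 2))
  have hc : Summable c := by
    apply Summable.of_norm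
    refine Summable.of_nonneg_of_le (fun n => norm_nonneg _) (fun n => ?_)
      ((Real.summable_pow_div_factorial ((‖D‖ * M) ^ 2)).mul_left (‖D‖ * M))
    calc ‖c n‖ ≤ ((2 * n + 1)! : ℝ)⁻¹ * ((‖D‖ * M) ^ (2 * n + 1)) := by
          rw [hcdef, norm_smul]
          gcongr
          · simp
          · rw [mul_pow]
            calc ‖D ^ (2*n+1) * h ^ (2*n+1)‖ ≤ ‖D ^ (2*n+1)‖ * ‖h ^ (2*n+1)‖ := norm_mul_le _ _
            _ ≤ ‖D‖ ^ (2*n+1) * M ^ (2*n+1) := by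
                gcongr
                · exact norm_pow_le' _ (by omega)
                · calc ‖h ^ (2*n+1)‖ ≤ ‖h‖ ^ (2*n+1) := norm_pow_le' _ (by omega)
                  _ ≤ M ^ (2*n+1) := by gcongr
    _ ≤ ‖D‖ * M * (((‖D‖ * M) ^ 2) ^ n / n !) := by
        have hf1 : (0:ℝ) < ((2*n+1)! : ℝ) := by exact_mod_cast Nat.factorial_pos _
        have hf2 : (0:ℝ) < (n ! : ℝ) := by exact_mod_cast Nat.factorial_pos _
        have hfle : n ! ≤ (2*n+1)! := Nat.factorial_le (by omega)
        rw [inv_mul_eq_div, mul_div_assoc' (‖D‖ * M), div_le_div_iff₀ hf1 hf2]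
        calc (‖D‖ * M) ^ (2*n+1) * n ! ≤ (‖D‖ * M) ^ (2*n+1) * (2*n+1)! := by gcongr
        _ = ‖D‖ * M * ((‖D‖ * M) ^ 2) ^ n * (2*n+1)! := by
            rw [← pow_mul, pow_succ']
    _ = ‖D‖ * M * (((‖D‖ * M) ^ 2) ^ n / n !) := by ring
  have hterm : ∀ n : ℕ, w (n + 1) = D * (c n * δ) := by
    intro n
    have e1 : 2 * (n + 1) = 2 * n + 2 := by ring
    have e2 : 2 * (n + 1) - 1 = 2 * n + 1 := by omega
    have hfne : ((2 * n + 1)! : ℂ) ≠ 0 := by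
      exact_mod_cast Nat.factorial_ne_zero _
    have hfne2 : ((2 * n + 2 : ℕ) : ℂ) ≠ 0 := by
      exact_mod_cast (by omega : (2 * n + 2 : ℕ) ≠ 0)
    calc w (n + 1)
        = (((2*n+2)! : ℂ))⁻¹ • (D ^ (2*n+2) * ((2*n+2) • (h ^ (2*n+1) * δ))) := by
          have e3 : 2 * n + 2 - 1 = 2 * n + 1 := by omega
          rw [hwdef]; simp only [e1, e2, e3]
    _ = ((((2*n+2)! : ℂ))⁻¹ * ((2*n+2 : ℕ) : ℂ)) • (D ^ (2*n+2) * (h ^ (2*n+1) * δ)) := by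
          rw [← Nat.cast_smul_eq_nsmul ℂ (2*n+2), mul_smul_comm, smul_smul]
    _ = (((2*n+1)! : ℂ))⁻¹ • (D ^ (2*n+2) * (h ^ (2*n+1) * δ)) := by
          congr 1
          have hfs : ((2*n+2)! : ℂ) = ((2*n+2 : ℕ) : ℂ) * ((2*n+1)! : ℂ) := by
            have : (2*n+2)! = (2*n+2) * (2*n+1)! := by
              rw [show 2*n+2 = (2*n+1)+1 from rfl, Nat.factorial_succ]
            exact_mod_cast this
          rw [hfs, mul_inv]
          have h22 : (2 * (n:ℂ) + 2) ≠ 0 := by push_cast at hfne2; exact hfne2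
          field_simp
    _ = D * (c n * δ) := by
          rw [hcdef]
          simp only [smul_mul_assoc, mul_smul_comm]
          congr 1
          have hps : D ^ (2*n+2) = D * D ^ (2*n+1) := pow_succ' D (2*n+1)
          rw [hps]
          simp [mul_assoc]
  have hw0 : w 0 = 0 := by simp [hwdef]
  calc (∑' n : ℕ, w n) = w 0 + ∑' n : ℕ, w (n + 1) := Summable.tsum_eq_zero_add hw
  _ = ∑' n : ℕ, D * (c n * δ) := by rw [hw0, zero_add]; exact tsum_congr hterm
  _ = D * ∑' n : ℕ, (c n * δ) := Summable.tsum_mul_left D (hc.mul_right δ)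
  _ = D * ((∑' n : ℕ, c n) * δ) := by rw [hc.tsum_mul_right δ]
  _ = D * (∑' n : ℕ, c n) * δ := by rw [mul_assoc]

end Main3

/-- If `cosh(Dh)` is invertible then `cosh(D(h+tδ))` is invertible for `t` near `0`, and
`t ↦ cosh(D(h+tδ))⁻¹` is differentiable at `0` with derivative
`−cosh(Dh)⁻¹·D·sinh(Dh)·δ·cosh(Dh)⁻¹`. -/
theorem stmt_6 (A : Type*) [NormedRing A] [NormedAlgebra ℂ A] [CompleteSpace A]
    (D h δ : A) (hcomm : h * δ = δ * h)
    (hunit : IsUnit (∑' n : ℕ, (((2 * n)! : ℂ))⁻¹ • (D ^ (2 * n) * h ^ (2 * n)))) :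
    (∀ᶠ t : ℝ in nhds 0,
      IsUnit (∑' n : ℕ, (((2 * n)! : ℂ))⁻¹ • (D ^ (2 * n) * (h + t • δ) ^ (2 * n)))) ∧
    HasDerivAt
      (fun t : ℝ =>
        Ring.inverse (∑' n : ℕ, (((2 * n)! : ℂ))⁻¹ • (D ^ (2 * n) * (h + t • δ) ^ (2 * n))))
      (-(Ring.inverse (∑' n : ℕ, (((2 * n)! : ℂ))⁻¹ • (D ^ (2 * n) * h ^ (2 * n))) * D *
          (∑' n : ℕ, (((2 * n + 1)! : ℂ))⁻¹ • (D ^ (2 * n + 1) * h ^ (2 * n + 1))) * δ *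
          Ring.inverse (∑' n : ℕ, (((2 * n)! : ℂ))⁻¹ • (D ^ (2 * n) * h ^ (2 * n)))))
      0 := by
  have hF : HasDerivAt
      (fun t : ℝ => ∑' n : ℕ, (((2 * n)! : ℂ))⁻¹ • (D ^ (2 * n) * (h + t • δ) ^ (2 * n)))
      (∑' n : ℕ, (((2 * n)! : ℂ))⁻¹ •
          (D ^ (2 * n) * ((2 * n) • ((h + (0:ℝ) • δ) ^ (2 * n - 1) * δ)))) 0 :=
    cosh_hasDerivAt D h δ hcomm
  rw [tsum_ident D h δ] at hF
  have hF0 : (∑' n : ℕ, (((2 * n)! : ℂ))⁻¹ • (D ^ (2 * n) * (h + (0:ℝ) • δ) ^ (2 * n)))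
      = ∑' n : ℕ, (((2 * n)! : ℂ))⁻¹ • (D ^ (2 * n) * h ^ (2 * n)) := by
    simp
  constructor
  · have hcont : ContinuousAt
        (fun t : ℝ => ∑' n : ℕ, (((2 * n)! : ℂ))⁻¹ • (D ^ (2 * n) * (h + t • δ) ^ (2 * n))) 0 :=
      hF.continuousAt
    have hmem : {x : A | IsUnit x} ∈ nhds
        (∑' n : ℕ, (((2 * n)! : ℂ))⁻¹ • (D ^ (2 * n) * (h + (0:ℝ) • δ) ^ (2 * n))) := by
      rw [hF0]
      exact Units.isOpen.mem_nhds hunit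
    exact hcont.eventually_mem hmem
  · obtain ⟨u, hu⟩ := hunit
    have hinv : HasFDerivAt (Ring.inverse : A → A)
        (-(ContinuousLinearMap.mulLeftRight ℝ A ↑u⁻¹) ↑u⁻¹)
        ((fun t : ℝ => ∑' n : ℕ, (((2 * n)! : ℂ))⁻¹ • (D ^ (2 * n) * (h + t • δ) ^ (2 * n))) 0) := by
      show HasFDerivAt _ _ (∑' n : ℕ, (((2 * n)! : ℂ))⁻¹ • (D ^ (2 * n) * (h + (0:ℝ) • δ) ^ (2 * n)))
      rw [hF0, ← hu]
      exact hasFDerivAt_ringInverse u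
    have hcomp := hinv.comp_hasDerivAt 0 hF
    have hue : Ring.inverse (∑' n : ℕ, (((2 * n)! : ℂ))⁻¹ • (D ^ (2 * n) * h ^ (2 * n)))
        = (↑u⁻¹ : A) := by rw [← hu, Ring.inverse_unit]
    rw [hue]
    convert hcomp using 1
    · rfl
    · rfl
    simp only [ContinuousLinearMap.neg_apply, ContinuousLinearMap.mulLeftRight_apply]
    simp [mul_assoc]
end

section
/- Let A be a unital complex Banach algebra, let p, m ∈ A, set c := pm − mp, and assume cm = mc. Then Σ_{n≥1} ((−1)^n/(2n)!)·p^{2n−1}·(p·m^{2n} − m^{2n}·p) = Σ_{n≥0} ((−1)^{n+1}/(2n+1)!)·p^{2n+1}·m^{2n+1}·c, both series being absolutely convergent. -/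
open scoped Nat

lemma comm_pow_aux {A : Type*} [Ring A] (p m c : A) (hc : c = p * m - m * p)
    (hcm : c * m = m * c) (k : ℕ) :
    p * m ^ k - m ^ k * p = k • (m ^ (k - 1) * c) := by
  induction k with
  | zero => simp
  | succ k ih =>
    have hck : ∀ j : ℕ, c * m ^ j = m ^ j * c := fun j =>
      (Commute.pow_right (hcm) j)
    have step : p * m ^ (k+1) - m ^ (k+1) * p
        = (p * m ^ k - m ^ k * p) * m + m ^ k * c := by
      rw [hc, pow_succ]; noncomm_ring
    rw [step, ih]
    rcases k with _ | k
    · simp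
    · have : ((k+1) • (m ^ (k + 1 - 1) * c)) * m = (k+1) • (m ^ (k+1) * c) := by
        rw [smul_mul_assoc, mul_assoc, hcm, ← mul_assoc, ← pow_succ]
        simp
      rw [this, succ_nsmul]
      simp [add_smul]

lemma key_term {A : Type*} [Ring A] [Algebra ℂ A] (p m c : A) (hc : c = p * m - m * p)
    (hcm : c * m = m * c) (n : ℕ) :
    ((-1 : ℂ) ^ (n + 1) / ((2 * (n + 1))! : ℂ)) •
        (p ^ (2 * (n + 1) - 1) * (p * m ^ (2 * (n + 1)) - m ^ (2 * (n + 1)) * p)) =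
      ((-1 : ℂ) ^ (n + 1) / ((2 * n + 1)! : ℂ)) • (p ^ (2 * n + 1) * m ^ (2 * n + 1) * c) := by
  have h1 : 2 * (n + 1) - 1 = 2 * n + 1 := by omega
  have h2 := comm_pow_aux p m c hc hcm (2 * (n + 1))
  rw [h1] at h2 ⊢
  rw [h2]
  rw [mul_smul_comm, ← Nat.cast_smul_eq_nsmul ℂ, smul_smul, ← mul_assoc]
  congr 1
  have hfac : ((2 * (n + 1))! : ℂ) = (2 * (n + 1) : ℕ) * ((2 * n + 1)! : ℂ) := by
    have : 2 * (n + 1) = (2 * n + 1) + 1 := by omega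
    rw [this, Nat.factorial_succ]
    push_cast
    ring
  have hne : ((2 * n + 1)! : ℂ) ≠ 0 := Nat.cast_ne_zero.mpr (Nat.factorial_ne_zero _)
  have hne2 : ((2 * (n + 1) : ℕ) : ℂ) ≠ 0 := Nat.cast_ne_zero.mpr (by omega)
  rw [hfac, div_mul_eq_mul_div, div_eq_div_iff (mul_ne_zero hne2 hne) hne]
  ring

lemma summable_rhs {A : Type*} [NormedRing A] [NormedAlgebra ℂ A] (p m c : A) :
    Summable fun n : ℕ =>
      ‖((-1 : ℂ) ^ (n + 1) / ((2 * n + 1)! : ℂ)) • (p ^ (2 * n + 1) * m ^ (2 * n + 1) * c)‖ := by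
  have hmaj : Summable fun k : ℕ => (‖p‖ * ‖m‖) ^ k / (k)! * ‖c‖ :=
    (Real.summable_pow_div_factorial (‖p‖ * ‖m‖)).mul_right _
  have hsub : Summable fun n : ℕ => (‖p‖ * ‖m‖) ^ (2 * n + 1) / ((2 * n + 1))! * ‖c‖ := by
    have := hmaj.comp_injective (i := fun n : ℕ => 2 * n + 1) (fun a b hab => by simp only [] at hab; omega)
    exact this
  refine Summable.of_nonneg_of_le (fun n => norm_nonneg _) (fun n => ?_) hsub
  rw [norm_smul]
  have h1 : ‖(-1 : ℂ) ^ (n + 1) / ((2 * n + 1)! : ℂ)‖ = 1 / ((2 * n + 1))! := by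
    rw [norm_div, norm_pow, norm_neg, norm_one, one_pow]
    congr 1
    rw [Complex.norm_natCast]
  rw [h1]
  have h2 : ‖p ^ (2 * n + 1) * m ^ (2 * n + 1) * c‖ ≤ (‖p‖ * ‖m‖) ^ (2 * n + 1) * ‖c‖ := by
    calc ‖p ^ (2 * n + 1) * m ^ (2 * n + 1) * c‖
        ≤ ‖p ^ (2 * n + 1) * m ^ (2 * n + 1)‖ * ‖c‖ := norm_mul_le _ _
      _ ≤ ‖p ^ (2 * n + 1)‖ * ‖m ^ (2 * n + 1)‖ * ‖c‖ := by
          gcongr; exact norm_mul_le _ _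
      _ ≤ ‖p‖ ^ (2 * n + 1) * ‖m‖ ^ (2 * n + 1) * ‖c‖ := by
          gcongr <;> [exact norm_pow_le' _ (by omega); exact norm_pow_le' _ (by omega)]
      _ = (‖p‖ * ‖m‖) ^ (2 * n + 1) * ‖c‖ := by rw [mul_pow]
  calc 1 / ((2 * n + 1))! * ‖p ^ (2 * n + 1) * m ^ (2 * n + 1) * c‖
      ≤ 1 / ((2 * n + 1))! * ((‖p‖ * ‖m‖) ^ (2 * n + 1) * ‖c‖) := by
        gcongr
    _ = (‖p‖ * ‖m‖) ^ (2 * n + 1) / ((2 * n + 1))! * ‖c‖ := by ring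

/-- Abstract form of the operator relation `𝒮_η^‡ η_x = 𝒞_η^‡ − ∂_x⁻¹ 𝒞_η^‡ ∂_x`
(multiplied through by `∂_x`): with `c := pm − mp` commuting with `m`,
`Σ_{n≥1} ((−1)ⁿ/(2n)!) p^{2n−1} (p m^{2n} − m^{2n} p)
  = Σ_{n≥0} ((−1)^{n+1}/(2n+1)!) p^{2n+1} m^{2n+1} c`. -/
theorem stmt_8 (A : Type*) [NormedRing A] [NormedAlgebra ℂ A] [CompleteSpace A]
    (p m c : A) (hc : c = p * m - m * p) (hcm : c * m = m * c) :
    (Summable fun n : ℕ =>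
      ‖((-1 : ℂ) ^ (n + 1) / ((2 * (n + 1))! : ℂ)) •
        (p ^ (2 * (n + 1) - 1) * (p * m ^ (2 * (n + 1)) - m ^ (2 * (n + 1)) * p))‖) ∧
    (Summable fun n : ℕ =>
      ‖((-1 : ℂ) ^ (n + 1) / ((2 * n + 1)! : ℂ)) • (p ^ (2 * n + 1) * m ^ (2 * n + 1) * c)‖) ∧
    ∑' n : ℕ, ((-1 : ℂ) ^ (n + 1) / ((2 * (n + 1))! : ℂ)) •
        (p ^ (2 * (n + 1) - 1) * (p * m ^ (2 * (n + 1)) - m ^ (2 * (n + 1)) * p)) =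
      ∑' n : ℕ, ((-1 : ℂ) ^ (n + 1) / ((2 * n + 1)! : ℂ)) •
        (p ^ (2 * n + 1) * m ^ (2 * n + 1) * c) := by
  have hkey := key_term p m c hc hcm
  refine ⟨?_, summable_rhs p m c, ?_⟩
  · simpa only [hkey] using summable_rhs p m c
  · exact tsum_congr hkey
end
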